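/- Let (λ, ρ, s) be a homothetic datum on a ring R, let Φ be a ring automorphism of R and v ∈ R. Define s' = Φ(s + v + v² − ρ(v) − λ(v)), λ'(a) = Φ(λ(Φ⁻¹(a)) − v·Φ⁻¹(a)) and ρ'(a) = Φ(ρ(Φ⁻¹(a)) − Φ⁻¹(a)·v). Then (λ', ρ', s') is a homothetic datum on R, and the map Φ_v : a ↦ Φ(a + v) is a bijection of R satisfying Φ_v(a − b + c) = Φ_v(a) − Φ_v(b) + Φ_v(c) and Φ_v(a·b + ρ(a) + λ(b) + s) = Φ_v(a)·Φ_v(b) + ρ'(Φ_v(a)) + λ'(Φ_v(b)) + s' for all a, b, c ∈ R. -/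
import Mathlib


/-- The transformed left operator `λ'(a) = Φ(λ(Φ⁻¹(a)) − v·Φ⁻¹(a))`. -/
def conjLam {R : Type*} [NonUnitalRing R] (Φ : R ≃+* R) (lam : R →+ R) (v : R) :
    R → R := fun a => Φ (lam (Φ.symm a) - v * Φ.symm a)

/-- The transformed right operator `ρ'(a) = Φ(ρ(Φ⁻¹(a)) − Φ⁻¹(a)·v)`. -/
def conjRho {R : Type*} [NonUnitalRing R] (Φ : R ≃+* R) (rho : R →+ R) (v : R) :
    R → R := fun a => Φ (rho (Φ.symm a) - Φ.symm a * v)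

/-- The transformed element `s' = Φ(s + v + v² − ρ(v) − λ(v))`. -/
def conjS {R : Type*} [NonUnitalRing R] (Φ : R ≃+* R) (lam rho : R →+ R)
    (s v : R) : R := Φ (s + v + v * v - rho v - lam v)

/-- Transforming a homothetic datum `(λ, ρ, s)` on `R` by a ring automorphism `Φ`
and an element `v` yields a homothetic datum `(λ', ρ', s')`, and the map
`Φ_v : a ↦ Φ(a + v)` is a bijection preserving the heap bracket and intertwining
the homothetic truss multiplications. -/
theorem homothetic_datum_transform {R : Type*} [NonUnitalRing R]
    (lam rho : R →+ R) (s : R)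
    (hlam : ∀ a b : R, lam (a * b) = lam a * b)
    (hrho : ∀ a b : R, rho (a * b) = a * rho b)
    (hmid : ∀ a b : R, a * lam b = rho a * b)
    (hperm : ∀ a : R, rho (lam a) = lam (rho a))
    (hs : lam s = rho s)
    (hll : ∀ a : R, lam (lam a) = lam a + s * a)
    (hrr : ∀ a : R, rho (rho a) = rho a + a * s)
    (Φ : R ≃+* R) (v : R) :
    (∀ a b : R, conjLam Φ lam v (a + b) = conjLam Φ lam v a + conjLam Φ lam v b) ∧
    (∀ a b : R, conjRho Φ rho v (a + b) = conjRho Φ rho v a + conjRho Φ rho v b) ∧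
    (∀ a b : R, conjLam Φ lam v (a * b) = conjLam Φ lam v a * b) ∧
    (∀ a b : R, conjRho Φ rho v (a * b) = a * conjRho Φ rho v b) ∧
    (∀ a b : R, a * conjLam Φ lam v b = conjRho Φ rho v a * b) ∧
    (∀ a : R, conjRho Φ rho v (conjLam Φ lam v a) = conjLam Φ lam v (conjRho Φ rho v a)) ∧
    (conjLam Φ lam v (conjS Φ lam rho s v) = conjRho Φ rho v (conjS Φ lam rho s v)) ∧
    (∀ a : R, conjLam Φ lam v (conjLam Φ lam v a)
        = conjLam Φ lam v a + conjS Φ lam rho s v * a) ∧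
    (∀ a : R, conjRho Φ rho v (conjRho Φ rho v a)
        = conjRho Φ rho v a + a * conjS Φ lam rho s v) ∧
    (Function.Bijective (fun a : R => Φ (a + v))) ∧
    (∀ a b c : R, Φ ((a - b + c) + v) = Φ (a + v) - Φ (b + v) + Φ (c + v)) ∧
    (∀ a b : R, Φ ((a * b + rho a + lam b + s) + v)
        = Φ (a + v) * Φ (b + v) + conjRho Φ rho v (Φ (a + v))
            + conjLam Φ lam v (Φ (b + v)) + conjS Φ lam rho s v) := by
  refine ⟨?_, ?_, ?_, ?_, ?_, ?_, ?_, ?_, ?_, ?_, ?_, ?_⟩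
  · intro a b
    apply Φ.symm.injective
    simp only [conjLam, map_add, map_mul, map_sub, RingEquiv.symm_apply_apply]
    noncomm_ring
  · intro a b
    apply Φ.symm.injective
    simp only [conjRho, map_add, map_mul, map_sub, RingEquiv.symm_apply_apply]
    noncomm_ring
  · intro a b
    apply Φ.symm.injective
    simp only [conjLam, map_add, map_mul, map_sub, RingEquiv.symm_apply_apply, hlam]
    noncomm_ring
  · intro a b
    apply Φ.symm.injective
    simp only [conjRho, map_add, map_mul, map_sub, RingEquiv.symm_apply_apply, hrho]
    noncomm_ring
  · intro a b
    apply Φ.symm.injective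
    simp only [conjLam, conjRho, map_add, map_mul, map_sub, RingEquiv.symm_apply_apply]
    simp only [mul_sub, sub_mul, hmid]
    noncomm_ring
  · intro a
    apply Φ.symm.injective
    simp only [conjLam, conjRho, map_add, map_mul, map_sub,
      RingEquiv.symm_apply_apply, hlam, hrho, hperm]
    simp only [mul_sub, sub_mul, hmid]
    noncomm_ring
  · apply Φ.symm.injective
    simp only [conjLam, conjRho, conjS, map_add, map_mul, map_sub,
      RingEquiv.symm_apply_apply, hlam, hrho, hperm, hs, hll, hrr]
    simp only [mul_sub, sub_mul, mul_add, add_mul, hmid]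
    noncomm_ring
  · intro a
    apply Φ.symm.injective
    simp only [conjLam, conjS, map_add, map_mul, map_sub,
      RingEquiv.symm_apply_apply, hlam, hll]
    simp only [mul_sub, sub_mul, mul_add, add_mul, hmid]
    noncomm_ring
  · intro a
    apply Φ.symm.injective
    simp only [conjRho, conjS, map_add, map_mul, map_sub,
      RingEquiv.symm_apply_apply, hrho, hrr]
    simp only [mul_sub, sub_mul, mul_add, add_mul, hmid]
    noncomm_ring
  · exact Φ.bijective.comp (Equiv.addRight v).bijective
  · intro a b c
    rw [show (a - b + c) + v = (a + v) - (b + v) + (c + v) by abel, map_add, map_sub]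
  · intro a b
    apply Φ.symm.injective
    simp only [conjLam, conjRho, conjS, map_add, map_mul, map_sub,
      RingEquiv.symm_apply_apply]
    simp only [mul_sub, sub_mul, mul_add, add_mul, hmid]
    noncomm_ring
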